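/- Let X and Z be standard Borel measurable spaces, let μ be a probability measure on X, let κ be a Markov kernel from X to Z, and let q be a probability measure on Z. Let ν = μ.bind κ be the marginal of Z (i.e., ν(B) = ∫ κ(x)(B) dμ(x)). Assume κ(x) ≪ ν for μ-almost every x, ν ≪ q, and that all the Kullback–Leibler divergences below are finite. Then ∫ KL(κ(x) ‖ q) dμ(x) = ∫ KL(κ(x) ‖ ν) dμ(x) + KL(ν ‖ q). In particular, ∫ KL(κ(x) ‖ q) dμ(x) ≥ ∫ KL(κ(x) ‖ ν) dμ(x), so replacing the true marginal ν by any variational approximation q yields an upper bound on the expected divergence to the marginal. -/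

import Mathlib

open MeasureTheory ProbabilityTheory

noncomputable def klDiv {α : Type*} [MeasurableSpace α] (μ ν : Measure α) : ℝ :=
  ∫ x, Real.log (μ.rnDeriv ν x).toReal ∂μ

lemma bind_eq_snd_compProd {X Z : Type*} [MeasurableSpace X] [MeasurableSpace Z]
    (μ : Measure X) [SFinite μ] (κ : Kernel X Z) [IsSFiniteKernel κ] :
    μ.bind κ = (μ.compProd κ).snd := by
  ext s hs
  rw [Measure.snd_apply hs, Measure.compProd_apply (measurable_snd hs),
    Measure.bind_apply hs (Kernel.measurable κ).aemeasurable]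
  rfl

lemma integral_bind' {X Z : Type*} [MeasurableSpace X] [MeasurableSpace Z]
    (μ : Measure X) [SFinite μ] (κ : Kernel X Z) [IsSFiniteKernel κ]
    {g : Z → ℝ} (hg : StronglyMeasurable g) (hgi : Integrable g (μ.bind κ)) :
    ∫ z, g z ∂(μ.bind κ) = ∫ x, ∫ z, g z ∂(κ x) ∂μ := by
  rw [bind_eq_snd_compProd] at hgi ⊢
  rw [Measure.snd, integral_map measurable_snd.aemeasurable hg.aestronglyMeasurable]
  rw [Measure.snd] at hgi
  have hgi2 : Integrable (fun p : X × Z => g p.2) (μ.compProd κ) :=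
    (integrable_map_measure hg.aestronglyMeasurable measurable_snd.aemeasurable).mp hgi
  exact Measure.integral_compProd hgi2

lemma klDiv_nonneg' {α : Type*} [MeasurableSpace α] (ν q : Measure α)
    [IsProbabilityMeasure ν] [IsFiniteMeasure q] (hq1 : q Set.univ ≤ 1) (h : ν ≪ q)
    (hi : Integrable (fun z => Real.log (ν.rnDeriv q z).toReal) ν) :
    0 ≤ klDiv ν q := by
  have hfi : Integrable (fun z => - llr ν q z) ν := by
    have : Integrable (llr ν q) ν := hi
    exact this.neg
  have hexp : (fun z => Real.exp (- llr ν q z)) =ᵐ[ν] fun z => (q.rnDeriv ν z).toReal :=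
    exp_neg_llr h
  have hgi : Integrable (fun z => Real.exp (- llr ν q z)) ν :=
    (Measure.integrable_toReal_rnDeriv).congr hexp.symm
  have hjen : Real.exp (∫ z, - llr ν q z ∂ν) ≤ ∫ z, Real.exp (- llr ν q z) ∂ν := by
    have := convexOn_exp.map_integral_le Real.continuous_exp.continuousOn isClosed_univ
      (Filter.Eventually.of_forall fun z => Set.mem_univ _) hfi
      (by exact hgi)
    exact this
  have hle1 : ∫ z, Real.exp (- llr ν q z) ∂ν ≤ 1 := by
    rw [integral_congr_ae hexp]
    calc ∫ z, (q.rnDeriv ν z).toReal ∂ν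
        ≤ (q Set.univ).toReal := by
          simpa [Measure.real] using Measure.setIntegral_toReal_rnDeriv_le (μ := q) (ν := ν)
            (s := Set.univ) (measure_ne_top q _)
      _ ≤ 1 := by simpa using ENNReal.toReal_mono ENNReal.one_ne_top hq1
  have : Real.exp (- ∫ z, llr ν q z ∂ν) ≤ Real.exp 0 := by
    rw [Real.exp_zero, ← integral_neg]
    exact hjen.trans hle1
  have h2 : - ∫ z, llr ν q z ∂ν ≤ 0 := Real.exp_le_exp.mp this
  have : (0:ℝ) ≤ ∫ z, llr ν q z ∂ν := by linarith
  exact this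

theorem expected_klDiv_eq_expected_klDiv_marginal_add_klDiv
    {X Z : Type*} [MeasurableSpace X] [StandardBorelSpace X]
    [MeasurableSpace Z] [StandardBorelSpace Z]
    (μ : Measure X) [IsProbabilityMeasure μ]
    (κ : Kernel X Z) [IsMarkovKernel κ]
    (q : Measure Z) [IsProbabilityMeasure q]
    (ν : Measure Z) (hν : ν = μ.bind κ)
    -- absolute continuity assumptions
    (hκν : ∀ᵐ x ∂μ, κ x ≪ ν) (hνq : ν ≪ q)
    -- finiteness of all Kullback–Leibler divergences involved:
    (hfin_q : ∀ᵐ x ∂μ, Integrable (fun z => Real.log ((κ x).rnDeriv q z).toReal) (κ x))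
    (hfin_ν : ∀ᵐ x ∂μ, Integrable (fun z => Real.log ((κ x).rnDeriv ν z).toReal) (κ x))
    (hfin_νq : Integrable (fun z => Real.log (ν.rnDeriv q z).toReal) ν)
    (hint_q : Integrable (fun x => klDiv (κ x) q) μ)
    (hint_ν : Integrable (fun x => klDiv (κ x) ν) μ) :
    (∫ x, klDiv (κ x) q ∂μ = ∫ x, klDiv (κ x) ν ∂μ + klDiv ν q) ∧
      (∫ x, klDiv (κ x) ν ∂μ ≤ ∫ x, klDiv (κ x) q ∂μ) := by
  have hνprob : IsProbabilityMeasure ν := by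
    constructor
    rw [hν, Measure.bind_apply MeasurableSet.univ (Kernel.measurable κ).aemeasurable]
    simp
  set g : Z → ℝ := fun z => Real.log (ν.rnDeriv q z).toReal with hg_def
  have hg_sm : StronglyMeasurable g :=
    ((Measure.measurable_rnDeriv ν q).ennreal_toReal.log).stronglyMeasurable
  -- key pointwise decomposition
  have key : ∀ᵐ x ∂μ, klDiv (κ x) q = klDiv (κ x) ν + ∫ z, g z ∂(κ x) := by
    filter_upwards [hκν, hfin_q, hfin_ν] with x hx1 hx2 hx3
    have hxq : κ x ≪ q := hx1.trans hνq
    have hmul : (fun z => (κ x).rnDeriv ν z * ν.rnDeriv q z) =ᵐ[κ x]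
        (κ x).rnDeriv q := hxq.ae_eq (Measure.rnDeriv_mul_rnDeriv hx1)
    have hpos1 : ∀ᵐ z ∂(κ x), 0 < (κ x).rnDeriv ν z := Measure.rnDeriv_pos hx1
    have hpos2 : ∀ᵐ z ∂(κ x), 0 < ν.rnDeriv q z := hx1.ae_le (Measure.rnDeriv_pos hνq)
    have hlt1 : ∀ᵐ z ∂(κ x), (κ x).rnDeriv ν z < ⊤ := hx1.ae_le (Measure.rnDeriv_lt_top _ _)
    have hlt2 : ∀ᵐ z ∂(κ x), ν.rnDeriv q z < ⊤ := hxq.ae_le (Measure.rnDeriv_lt_top _ _)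
    have heq : (fun z => Real.log ((κ x).rnDeriv q z).toReal) =ᵐ[κ x]
        fun z => Real.log ((κ x).rnDeriv ν z).toReal + g z := by
      filter_upwards [hmul, hpos1, hpos2, hlt1, hlt2] with z hm h1 h2 h3 h4
      rw [← hm, ENNReal.toReal_mul, Real.log_mul]
      · exact (ENNReal.toReal_pos h1.ne' h3.ne).ne'
      · exact (ENNReal.toReal_pos h2.ne' h4.ne).ne'
    have hgint : Integrable g (κ x) := by
      have h5 := (Integrable.congr hx2 heq).sub hx3
      exact h5.congr (Filter.Eventually.of_forall fun z => by simp)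
    rw [klDiv, integral_congr_ae heq, integral_add hx3 hgint]
    rfl
  have hG_int : Integrable (fun x => ∫ z, g z ∂(κ x)) μ := by
    refine (hint_q.sub hint_ν).congr ?_
    filter_upwards [key] with x hx
    simp only [Pi.sub_apply, hx]
    ring
  have hint_eq : ∫ x, ∫ z, g z ∂(κ x) ∂μ = klDiv ν q := by
    rw [klDiv, ← hg_def]
    rw [hν] at hfin_νq ⊢
    exact (integral_bind' μ κ hg_sm hfin_νq).symm
  have main : ∫ x, klDiv (κ x) q ∂μ = ∫ x, klDiv (κ x) ν ∂μ + klDiv ν q := by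
    calc ∫ x, klDiv (κ x) q ∂μ
        = ∫ x, (klDiv (κ x) ν + ∫ z, g z ∂(κ x)) ∂μ := integral_congr_ae key
      _ = ∫ x, klDiv (κ x) ν ∂μ + ∫ x, ∫ z, g z ∂(κ x) ∂μ := integral_add hint_ν hG_int
      _ = ∫ x, klDiv (κ x) ν ∂μ + klDiv ν q := by rw [hint_eq]
  refine ⟨main, ?_⟩
  rw [main]
  have hkl : 0 ≤ klDiv ν q := klDiv_nonneg' ν q (by simp) hνq hfin_νq
  linarith
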